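/- For any class F of next-token generators over {0,1} that is obtained from a collection of time-dependent compositions, the growth function of the time-dependent end-to-end class satisfies Γ_{F^{e2e-TD(T)}}(m) ≤ (Γ_F(m))^T, and consequently VCdim(F^{e2e-TD(T)}) ≤ 3·T·VCdim(F)·log₂(2T/ln 2). -/

import Mathlib

def applyAppend (f : List Bool → Bool) (x : List Bool) : List Bool := x ++ [f x]

/-- Time-dependent chain of thought: apply `f̄_1`, then `f̄_2`, ..., then `f̄_T`
(here `fs t` is `f_{t+1}`). -/
def tdCot (fs : ℕ → (List Bool → Bool)) : ℕ → List Bool → List Bool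
  | 0, x => x
  | T + 1, x => applyAppend (fs T) (tdCot fs T x)

/-- The time-dependent end-to-end class `F^{e2e-TD(T)}`: last token of
`f̄_T ∘ ⋯ ∘ f̄_1(x)` for arbitrary `f_1, …, f_T ∈ F`. -/
def tdE2eClass (F : Set (List Bool → Bool)) (T : ℕ) : Set (List Bool → Bool) :=
  {g | ∃ fs : ℕ → (List Bool → Bool), (∀ t, fs t ∈ F) ∧
    g = fun x => (tdCot fs T x).getLastD false}

noncomputable def growth (H : Set (List Bool → Bool)) (m : ℕ) : ℕ :=
  sSup {n | ∃ x : Fin m → List Bool,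
    n = Set.ncard ((fun h => fun i => h (x i)) '' H)}

def Shatters {X : Type*} (H : Set (X → Bool)) (d : ℕ) : Prop :=
  ∃ x : Fin d → X, ∀ b : Fin d → Bool, ∃ h ∈ H, ∀ i, h (x i) = b i

/-! ### Auxiliary lemmas about `growth` -/

lemma growth_bdd (H : Set (List Bool → Bool)) (m : ℕ) :
    BddAbove {n | ∃ x : Fin m → List Bool,
      n = Set.ncard ((fun h => fun i => h (x i)) '' H)} := by
  refine ⟨2 ^ m, fun n hn => ?_⟩
  obtain ⟨x, rfl⟩ := hn
  calc Set.ncard ((fun h => fun i => h (x i)) '' H)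
      ≤ (Set.univ : Set (Fin m → Bool)).ncard :=
        Set.ncard_le_ncard (Set.subset_univ _) Set.finite_univ
    _ = 2 ^ m := by
        rw [Set.ncard_univ, Nat.card_eq_fintype_card]
        simp [Fintype.card_fun]

lemma ncard_image_le_growth (H : Set (List Bool → Bool)) (m : ℕ)
    (x : Fin m → List Bool) :
    Set.ncard ((fun h => fun i => h (x i)) '' H) ≤ growth H m :=
  le_csSup (growth_bdd H m) ⟨x, rfl⟩

lemma two_pow_le_growth (H : Set (List Bool → Bool)) (d : ℕ)
    (h : Shatters H d) : 2 ^ d ≤ growth H d := by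
  obtain ⟨x, hx⟩ := h
  have himg : (fun h => fun i => h (x i)) '' H = Set.univ := by
    ext b
    simp only [Set.mem_image, Set.mem_univ, iff_true]
    obtain ⟨h, hH, hb⟩ := hx b
    exact ⟨h, hH, funext hb⟩
  have : Set.ncard ((fun h => fun i => h (x i)) '' H) = 2 ^ d := by
    rw [himg, Set.ncard_univ, Nat.card_eq_fintype_card]
    simp [Fintype.card_fun]
  calc 2 ^ d = Set.ncard ((fun h => fun i => h (x i)) '' H) := this.symm
    _ ≤ growth H d := ncard_image_le_growth H d x

open Finset in
lemma growth_le_sum (F : Set (List Bool → Bool)) (D : ℕ)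
    (hDmax : ∀ d, Shatters F d → d ≤ D) (m : ℕ) :
    growth F m ≤ ∑ k ∈ Finset.Iic D, m.choose k := by
  classical
  apply csSup_le
  · exact ⟨_, (fun _ => ([] : List Bool)), rfl⟩
  rintro n ⟨x, rfl⟩
  set A : Set (Fin m → Bool) := (fun h => fun i => h (x i)) '' F with hA
  have hAfin : A.Finite := Set.toFinite _
  set φ : (Fin m → Bool) → Finset (Fin m) := fun b => Finset.univ.filter (fun i => b i = true) with hφ
  have hφinj : Function.Injective φ := by
    intro a b hab
    funext i
    have : (i ∈ φ a) = (i ∈ φ b) := by rw [hab]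
    simpa [hφ] using this
  set 𝒜 : Finset (Finset (Fin m)) := hAfin.toFinset.image φ with h𝒜
  have hcard : A.ncard = #𝒜 := by
    rw [h𝒜, Finset.card_image_of_injective _ hφinj, Set.ncard_eq_toFinset_card]
  -- vcDim bound
  have hvc : 𝒜.vcDim ≤ D := by
    apply Finset.sup_le
    intro s hs
    rw [Finset.mem_shatterer] at hs
    -- enumerate s
    set k := #s with hk
    set e : Fin k → Fin m := fun j => s.orderIsoOfFin rfl j with he
    have heinj : Function.Injective e := fun a b hab => by
      have := (s.orderIsoOfFin (rfl : #s = k)).injective (Subtype.ext hab)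
      exact this
    have hes : ∀ j, e j ∈ s := fun j => (s.orderIsoOfFin rfl j).2
    have : Shatters F k := by
      refine ⟨fun j => x (e j), fun b => ?_⟩
      set t : Finset (Fin m) := (Finset.univ.filter (fun j => b j = true)).image e with ht
      have hts : t ⊆ s := by
        intro i hi
        rw [ht, Finset.mem_image] at hi
        obtain ⟨j, _, rfl⟩ := hi
        exact hes j
      obtain ⟨u, hu𝒜, hsu⟩ := hs hts
      rw [h𝒜, Finset.mem_image] at hu𝒜
      obtain ⟨a, ha, rfl⟩ := hu𝒜
      rw [Set.Finite.mem_toFinset, hA] at ha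
      obtain ⟨h, hF, rfl⟩ := ha
      refine ⟨h, hF, fun j => ?_⟩
      have hj : e j ∈ s ∩ φ (fun i => h (x i)) ↔ e j ∈ t := by rw [hsu]
      have h1 : e j ∈ s ∩ φ (fun i => h (x i)) ↔ h (x (e j)) = true := by
        simp [hφ, hes j]
      have h2 : e j ∈ t ↔ b j = true := by
        simp only [ht, Finset.mem_image, Finset.mem_filter, Finset.mem_univ, true_and]
        constructor
        · rintro ⟨j', hj', hj'e⟩
          rwa [heinj hj'e] at hj'
        · exact fun hb => ⟨j, hb, rfl⟩
      rcases Bool.eq_false_or_eq_true (b j) with hb | hb <;>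
        rcases Bool.eq_false_or_eq_true (h (x (e j))) with hh | hh <;>
          simp_all [h1, h2]
    exact hDmax k this
  calc A.ncard = #𝒜 := hcard
    _ ≤ #𝒜.shatterer := Finset.card_le_card_shatterer 𝒜
    _ ≤ ∑ k ∈ Finset.Iic 𝒜.vcDim, (Fintype.card (Fin m)).choose k :=
        Finset.card_shatterer_le_sum_vcDim
    _ ≤ ∑ k ∈ Finset.Iic D, m.choose k := by
        simp only [Fintype.card_fin]
        exact Finset.sum_le_sum_of_subset (Finset.Iic_subset_Iic.2 hvc)

lemma ncard_biUnion_le' {β γ : Type*} (S : Set β) (hS : S.Finite)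
    (A : β → Set γ) (G : ℕ) (hA : ∀ y, (A y).Finite)
    (hG : ∀ y ∈ S, (A y).ncard ≤ G) :
    (⋃ y ∈ S, A y).ncard ≤ S.ncard * G := by
  classical
  set sF := hS.toFinset with hsF
  have hco : (⋃ y ∈ S, A y) = ↑(sF.biUnion (fun y => (hA y).toFinset)) := by
    ext z
    simp [hsF, Set.Finite.mem_toFinset]
  rw [hco, Set.ncard_coe_finset]
  calc (sF.biUnion fun y => (hA y).toFinset).card
      ≤ ∑ y ∈ sF, ((hA y).toFinset).card := Finset.card_biUnion_le
    _ ≤ ∑ _y ∈ sF, G := by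
        apply Finset.sum_le_sum
        intro y hy
        rw [← Set.ncard_eq_toFinset_card _ (hA y)]
        exact hG y (by simpa [hsF, Set.Finite.mem_toFinset] using hy)
    _ = sF.card * G := by rw [Finset.sum_const, smul_eq_mul]
    _ = S.ncard * G := by rw [hsF, ← Set.ncard_eq_toFinset_card _ hS]

lemma growth_td (F : Set (List Bool → Bool)) (T : ℕ) (m : ℕ) :
    growth (tdE2eClass F T) m ≤ (growth F m) ^ T := by
  classical
  apply csSup_le
  · exact ⟨_, (fun _ => ([] : List Bool)), rfl⟩
  rintro n ⟨x, rfl⟩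
  set G := growth F m with hG
  set Fs : Set (ℕ → List Bool → Bool) := {fs | ∀ t, fs t ∈ F} with hFs
  set Traj : ℕ → Set (Fin m → List Bool) :=
    fun t => (fun fs => fun i => tdCot fs t (x i)) '' Fs with hTraj
  set Ay : (Fin m → List Bool) → Set (Fin m → List Bool) :=
    fun y => (fun p => fun i => y i ++ [p i]) '' ((fun f => fun i => f (y i)) '' F) with hAy
  have hAyfin : ∀ y, (Ay y).Finite := fun y => (Set.toFinite _).image _
  have hAycard : ∀ y, (Ay y).ncard ≤ G := by
    intro y
    calc (Ay y).ncard ≤ ((fun f => fun i => f (y i)) '' F).ncard :=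
          Set.ncard_image_le (Set.toFinite _)
      _ ≤ G := ncard_image_le_growth F m y
  have key : ∀ t, (Traj t).Finite ∧ (Traj t).ncard ≤ G ^ t := by
    intro t
    induction t with
    | zero =>
      have hsub : Traj 0 ⊆ {x} := by
        rintro z ⟨fs, _, rfl⟩
        simp only [Set.mem_singleton_iff]
        funext i; rfl
      exact ⟨(Set.finite_singleton x).subset hsub,
        le_trans (Set.ncard_le_ncard hsub (Set.finite_singleton x))
          (by simp [Set.ncard_singleton])⟩
    | succ t ih =>
      have hsub : Traj (t + 1) ⊆ ⋃ y ∈ Traj t, Ay y := by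
        rintro z ⟨fs, hfs, rfl⟩
        apply Set.mem_biUnion (Set.mem_image_of_mem _ hfs)
        refine ⟨fun i => fs t (tdCot fs t (x i)), Set.mem_image_of_mem _ (hfs t), ?_⟩
        funext i
        rfl
      have hUfin : (⋃ y ∈ Traj t, Ay y).Finite :=
        Set.Finite.biUnion ih.1 (fun y _ => hAyfin y)
      refine ⟨hUfin.subset hsub, ?_⟩
      calc (Traj (t + 1)).ncard ≤ (⋃ y ∈ Traj t, Ay y).ncard :=
            Set.ncard_le_ncard hsub hUfin
        _ ≤ (Traj t).ncard * G :=
            ncard_biUnion_le' _ ih.1 _ G hAyfin (fun y _ => hAycard y)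
        _ ≤ G ^ t * G := Nat.mul_le_mul_right G ih.2
        _ = G ^ (t + 1) := (pow_succ G t).symm
  have hsub : (fun h => fun i => h (x i)) '' tdE2eClass F T ⊆
      (fun y => fun i => (y i).getLastD false) '' Traj T := by
    rintro b ⟨g, ⟨fs, hfs, rfl⟩, rfl⟩
    exact ⟨fun i => tdCot fs T (x i), Set.mem_image_of_mem _ hfs, rfl⟩
  calc ((fun h => fun i => h (x i)) '' tdE2eClass F T).ncard
      ≤ ((fun y => fun i => (y i).getLastD false) '' Traj T).ncard :=
        Set.ncard_le_ncard hsub ((key T).1.image _)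
    _ ≤ (Traj T).ncard := Set.ncard_image_le (key T).1
    _ ≤ G ^ T := (key T).2

/-! ### Real-analytic lemmas -/

lemma sum_choose_le_real (D n : ℕ) (hD : 1 ≤ D) (hn : D ≤ n) :
    (∑ k ∈ Finset.Iic D, (n.choose k : ℝ)) ≤ (Real.exp 1 * n / D) ^ D := by
  have hn1 : 1 ≤ n := le_trans hD hn
  have hn0 : (0:ℝ) < n := by exact_mod_cast Nat.lt_of_lt_of_le Nat.zero_lt_one hn1
  have hD0 : (0:ℝ) < D := by exact_mod_cast hD
  set r : ℝ := D / n with hr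
  have hr0 : 0 < r := div_pos hD0 hn0
  have hr1 : r ≤ 1 := (div_le_one hn0).2 (by exact_mod_cast hn)
  have key : r ^ D * ∑ k ∈ Finset.Iic D, (n.choose k : ℝ) ≤ Real.exp D := by
    calc r ^ D * ∑ k ∈ Finset.Iic D, (n.choose k : ℝ)
        = ∑ k ∈ Finset.Iic D, (n.choose k : ℝ) * r ^ D := by
          rw [Finset.mul_sum]; congr 1; funext k; ring
      _ ≤ ∑ k ∈ Finset.Iic D, (n.choose k : ℝ) * r ^ k := by
          apply Finset.sum_le_sum
          intro k hk
          have : r ^ D ≤ r ^ k :=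
            pow_le_pow_of_le_one hr0.le hr1 (Finset.mem_Iic.1 hk)
          exact mul_le_mul_of_nonneg_left this (by positivity)
      _ ≤ ∑ k ∈ Finset.range (n + 1), (n.choose k : ℝ) * r ^ k := by
          apply Finset.sum_le_sum_of_subset_of_nonneg
          · intro k hk
            rw [Finset.mem_range]
            exact Nat.lt_succ_of_le (le_trans (Finset.mem_Iic.1 hk) hn)
          · intro k _ _; positivity
      _ = (r + 1) ^ n := by
          rw [add_pow]
          congr 1; funext k; rw [one_pow]; ring
      _ ≤ (Real.exp r) ^ n := by
          apply pow_le_pow_left₀ (by positivity)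
          exact Real.add_one_le_exp r
      _ = Real.exp D := by
          rw [← Real.exp_nat_mul]
          congr 1
          field_simp [hr]
          rw [hr]; field_simp
  have hcancel : (Real.exp 1 * n / D) ^ D * r ^ D = Real.exp D := by
    rw [← mul_pow]
    have : Real.exp 1 * n / D * r = Real.exp 1 := by
      field_simp [hr]
      rw [hr]; field_simp
    rw [this, ← Real.exp_one_pow]
  have h2 : (∑ k ∈ Finset.Iic D, (n.choose k : ℝ)) * r ^ D ≤
      (Real.exp 1 * n / D) ^ D * r ^ D := by
    rw [mul_comm]; exact key.trans_eq hcancel.symm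
  exact le_of_mul_le_mul_right h2 (by positivity)

lemma final_numeric (T D d : ℕ) (hT : 1 ≤ T) (hD : 1 ≤ D) (hd : D < d)
    (hmain : (d : ℝ) * Real.log 2 ≤ ((D : ℝ) * T) * Real.log (Real.exp 1 * d / D)) :
    (d : ℝ) ≤ 3 * T * D * Real.logb 2 (2 * T / Real.log 2) := by
  have hT0 : (0:ℝ) < T := by exact_mod_cast hT
  have hD0 : (0:ℝ) < D := by exact_mod_cast hD
  have hd0 : (0:ℝ) < d := by exact_mod_cast Nat.lt_of_le_of_lt (Nat.zero_le D) hd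
  set l2 : ℝ := Real.log 2 with hl2
  set E : ℝ := Real.exp 1 with hE
  set a : ℝ := (D : ℝ) * T with ha
  set s : ℝ := Real.log T with hs
  set q : ℝ := Real.log l2 with hq
  have hl2pos : 0 < l2 := Real.log_pos (by norm_num)
  have ha0 : 0 < a := mul_pos hD0 hT0
  have hE0 : (0:ℝ) < E := Real.exp_pos 1
  have hs0 : 0 ≤ s := Real.log_nonneg (by exact_mod_cast hT)
  have hsplit : Real.log (E * d / D) = 1 + s + Real.log ((d : ℝ) / a) := by
    have h1 : E * d / D = E * (T * ((d : ℝ) / a)) := by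
      field_simp [ha]
      ring
    rw [h1, Real.log_mul (ne_of_gt hE0) (by positivity), Real.log_mul (ne_of_gt hT0)
      (by positivity), hE, Real.log_exp, hs]
    ring
  have hlogu : Real.log ((d : ℝ) / a) ≤ (d : ℝ) / a / E := by
    have h2 := Real.log_le_sub_one_of_pos (x := (d : ℝ) / a / E) (by positivity)
    have h3 : Real.log ((d : ℝ) / a / E) = Real.log ((d : ℝ) / a) - 1 := by
      rw [Real.log_div (by positivity) (ne_of_gt hE0), hE, Real.log_exp]
    linarith
  have hmain2 : (d : ℝ) * l2 ≤ a * (1 + s) + (d : ℝ) / E := by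
    have : a * Real.log ((d:ℝ)/a) ≤ a * ((d:ℝ)/a/E) := by
      apply mul_le_mul_of_nonneg_left hlogu ha0.le
    have hcanc : a * ((d:ℝ)/a/E) = (d:ℝ)/E := by field_simp
    calc (d : ℝ) * l2 ≤ a * Real.log (E * d / D) := hmain
      _ = a * (1 + s) + a * Real.log ((d:ℝ)/a) := by rw [hsplit]; ring
      _ ≤ a * (1 + s) + (d:ℝ)/E := by rw [← hcanc]; linarith
  have hl2lb : 0.6931471803 < l2 := Real.log_two_gt_d9
  have hl2ub : l2 < 0.6931471808 := Real.log_two_lt_d9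
  have hElb : 2.7182818283 < E := Real.exp_one_gt_d9
  have hqub : q ≤ l2 - 1 := Real.log_le_sub_one_of_pos hl2pos
  have hdE : (d : ℝ) / E ≤ 0.3679 * d := by
    rw [div_le_iff₀ hE0]
    nlinarith
  have hzpos : (0:ℝ) < 2 * T / l2 := by positivity
  have hgoal : Real.logb 2 (2 * T / l2) = (l2 + s - q) / l2 := by
    rw [Real.logb, Real.log_div (by positivity) (ne_of_gt hl2pos),
      Real.log_mul (by norm_num) (ne_of_gt hT0), ← hl2, ← hs, ← hq]
  rw [hgoal]
  have h3a : 3 * (T:ℝ) * D = 3 * a := by rw [ha]; ring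
  rw [h3a, ← mul_div_assoc, le_div_iff₀ hl2pos]
  nlinarith [mul_le_mul_of_nonneg_left hqub (by positivity : (0:ℝ) ≤ 3 * a),
    mul_pos ha0 hl2pos, mul_nonneg ha0.le hs0, mul_nonneg (mul_nonneg ha0.le hs0) hl2pos.le,
    mul_le_mul_of_nonneg_left hl2ub.le hd0.le, mul_le_mul_of_nonneg_left hl2lb.le hd0.le]

/-- the growth function of the time-dependent end-to-end class
satisfies `Γ_{F^{e2e-TD(T)}}(m) ≤ (Γ_F(m))^T`, and consequently, if `F` has
finite VC dimension `D`, then `VCdim(F^{e2e-TD(T)}) ≤ 3·T·D·log₂(2T/ln 2)`. -/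
theorem tdE2e_growth_and_vc (F : Set (List Bool → Bool)) (D T : ℕ) (hT : 1 ≤ T)
    (hD : Shatters F D) (hDmax : ∀ d, Shatters F d → d ≤ D) :
    (∀ m, growth (tdE2eClass F T) m ≤ (growth F m) ^ T) ∧
    (∀ d, Shatters (tdE2eClass F T) d →
      (d : ℝ) ≤ 3 * T * D * Real.logb 2 (2 * T / Real.log 2)) := by
  constructor
  · exact growth_td F T
  · intro d hshat
    have h1 : 2 ^ d ≤ growth (tdE2eClass F T) d := two_pow_le_growth _ d hshat
    have h2 := growth_td F T d
    have h3 := growth_le_sum F D hDmax d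
    set B := ∑ k ∈ Finset.Iic D, d.choose k with hB
    have hnat : 2 ^ d ≤ B ^ T :=
      h1.trans (h2.trans (Nat.pow_le_pow_left h3 T))
    rcases Nat.eq_zero_or_pos D with hD0 | hD1
    · subst hD0
      have hB1 : B = 1 := by
        have : Finset.Iic 0 = ({0} : Finset ℕ) := rfl
        rw [hB, this, Finset.sum_singleton, Nat.choose_zero_right]
      rw [hB1, one_pow] at hnat
      have hd0 : d = 0 := by
        by_contra h
        exact absurd hnat (not_le.2 (Nat.one_lt_two_pow_iff.2 h))
      subst hd0
      simp
    · by_cases hdD : d ≤ D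
      · have hl2pos : 0 < Real.log 2 := Real.log_pos (by norm_num)
        have hL : (1:ℝ) ≤ Real.logb 2 (2 * T / Real.log 2) := by
          have hT1 : (1:ℝ) ≤ T := by exact_mod_cast hT
          have h2T : (2:ℝ) ≤ 2 * T / Real.log 2 := by
            rw [le_div_iff₀ hl2pos]
            nlinarith [Real.log_two_lt_d9]
          calc (1:ℝ) = Real.logb 2 2 := (Real.logb_self_eq_one (by norm_num)).symm
            _ ≤ _ := Real.logb_le_logb_of_le (by norm_num) (by norm_num) h2T
        have hd : (d:ℝ) ≤ D := by exact_mod_cast hdD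
        have hT1 : (1:ℝ) ≤ T := by exact_mod_cast hT
        have hD1' : (1:ℝ) ≤ D := by exact_mod_cast hD1
        have hstep : (D:ℝ) * 1 ≤ (3 * T * D) * Real.logb 2 (2 * T / Real.log 2) := by
          apply mul_le_mul ?_ hL zero_le_one (by positivity)
          nlinarith
        linarith
      · push_neg at hdD
        apply final_numeric T D d hT hD1 hdD
        have hD0R : (0:ℝ) < D := by exact_mod_cast hD1
        have hd0R : (0:ℝ) < d := by
          exact_mod_cast Nat.lt_of_le_of_lt (Nat.zero_le D) hdD
        have hcast : ((2:ℝ)) ^ d ≤ ((B:ℝ)) ^ T := by exact_mod_cast hnat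
        have hBreal : (B:ℝ) = ∑ k ∈ Finset.Iic D, (d.choose k : ℝ) := by
          rw [hB]; push_cast; rfl
        have hBle : (B:ℝ) ≤ (Real.exp 1 * d / D) ^ D := by
          rw [hBreal]; exact sum_choose_le_real D d hD1 hdD.le
        have hpow : ((2:ℝ)) ^ d ≤ (Real.exp 1 * d / D) ^ (D * T) := by
          calc ((2:ℝ)) ^ d ≤ ((B:ℝ)) ^ T := hcast
            _ ≤ ((Real.exp 1 * d / D) ^ D) ^ T :=
                pow_le_pow_left₀ (by positivity) hBle T
            _ = _ := by rw [← pow_mul]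
        have hlog := Real.log_le_log (by positivity) hpow
        rw [Real.log_pow, Real.log_pow] at hlog
        calc (d : ℝ) * Real.log 2 ≤ (↑(D * T)) * Real.log (Real.exp 1 * d / D) := hlog
          _ = ((D:ℝ) * T) * Real.log (Real.exp 1 * d / D) := by push_cast; ring
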